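/- If a stochastic choice function p is rationalizable on a menu M by an MSC model that is fully comparable on M, then p(i|M) > 0 for every i ∈ M, and p(·|M) is bounded in a cycle over every ordered pair of distinct alternatives of M. -/

import Mathlib

open Finset

variable {X : Type*} [DecidableEq X]

/-- The menus relevant to an MSC model on `M`: `M` itself and the two-element subsets of `M`. -/
def RelMenu (M N : Finset X) : Prop := N = M ∨ (N ⊆ M ∧ N.card = 2)

/-- `Q` is row-stochastic on `N`: nonnegative entries, rows summing to 1. -/
def RowStochOn (N : Finset X) (Q : X → X → ℝ) : Prop :=
  (∀ i ∈ N, ∀ j ∈ N, 0 ≤ Q i j) ∧ ∀ i ∈ N, ∑ j ∈ N, Q i j = 1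

/-- The axioms of an MSC model on the menu `M`: row-stochasticity on relevant menus,
(A1) prolonged consideration, (A2) pairwise comparability on binary sets, (A3) TR-IIA. -/
def IsMSC (M : Finset X) (q : Finset X → X → X → ℝ) : Prop :=
  (∀ N, RelMenu M N → RowStochOn N (q N)) ∧
  (∀ N, RelMenu M N → ∀ i ∈ N, 0 < q N i i) ∧
  (∀ i ∈ M, ∀ j ∈ M, i ≠ j → q {i, j} i j = 0 → 0 < q {i, j} j i) ∧
  (∀ N, RelMenu M N → ∀ i ∈ N, ∀ j ∈ N, i ≠ j →
    q {i, j} i j * q N j i = q {i, j} j i * q N i j)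

/-- `p` is a stochastic choice function. -/
def IsSCF (p : Finset X → X → ℝ) : Prop :=
  ∀ N : Finset X, N.Nonempty →
    (∀ i, 0 ≤ p N i) ∧ (∀ i, i ∉ N → p N i = 0) ∧ ∑ i ∈ N, p N i = 1

/-- `σ` is a stationary (row) vector of `Q` on `N`, i.e. `σ (I - Q) = 0` on `N`. -/
def StationaryOn (N : Finset X) (Q : X → X → ℝ) (σ : X → ℝ) : Prop :=
  ∀ j ∈ N, ∑ i ∈ N, σ i * Q i j = σ j

/-- The MSC model `q` rationalizes `p` on the menu `M`. -/
def Rationalizes (M : Finset X) (q : Finset X → X → X → ℝ) (p : Finset X → X → ℝ) : Prop :=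
  IsMSC M q ∧ ∀ N, RelMenu M N → StationaryOn N (q N) (p N)

/-- The weighted difference in choice probabilities `δ_ij(M)`. -/
def delta (p : Finset X → X → ℝ) (M : Finset X) (i j : X) : ℝ :=
  p M i * p {i, j} j - p {i, j} i * p M j

/-- The set of ordered pairs of consecutive elements (with wrap-around) of a list. -/
def cyclePairs (c : List X) : List (X × X) := c.zip (c.rotate 1)

/-- `c` is a cycle of distinct alternatives lying in (a subset of) `M`. -/
def IsCycleIn (M : Finset X) (c : List X) : Prop :=
  c.Nodup ∧ 2 ≤ c.length ∧ ∀ x ∈ c, x ∈ M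

/-- All pairs of the cycle have strictly positive `δ`. -/
def PosConsistent (p : Finset X → X → ℝ) (M : Finset X) (c : List X) : Prop :=
  ∀ pr ∈ cyclePairs c, 0 < delta p M pr.1 pr.2

/-- All pairs of the cycle have strictly negative `δ`. -/
def NegConsistent (p : Finset X → X → ℝ) (M : Finset X) (c : List X) : Prop :=
  ∀ pr ∈ cyclePairs c, delta p M pr.1 pr.2 < 0

/-- `p(·|M)` is bounded in a cycle over the pair `(i, j)`. -/
def BoundedInCycle (p : Finset X → X → ℝ) (M : Finset X) (i j : X) : Prop :=
  delta p M i j = 0 ∨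
    ∃ c : List X, IsCycleIn M c ∧ (i, j) ∈ cyclePairs c ∧
      (PosConsistent p M c ∨ NegConsistent p M c)


set_option linter.unusedSectionVars false

lemma chain_zip_aux {R : X → X → Prop} :
    ∀ (t : List X) (a z : X), List.Chain R a (t ++ [z]) →
      ∀ pr ∈ (a :: t).zip (t ++ [z]), R pr.1 pr.2 := by
  intro t
  induction t with
  | nil =>
    intro a z h pr hpr
    simp [List.zip] at hpr
    obtain ⟨hr, _⟩ := (List.isChain_cons_cons (R := R) (a := a) (b := z) (l := [])).mp h
    subst hpr
    exact hr
  | cons b t' ih =>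
    intro a z h pr hpr
    obtain ⟨hr, h'⟩ := (List.isChain_cons_cons (R := R) (a := a) (b := b) (l := t' ++ [z])).mp h
    simp only [List.cons_append, List.zip_cons_cons, List.mem_cons] at hpr
    rcases hpr with rfl | hpr
    · exact hr
    · exact ih b z h' pr hpr

lemma exists_pos_cycle {M : Finset X} {f : X → X → ℝ}
    (hskew : ∀ u v, f u v = - f v u)
    (hdiv : ∀ u ∈ M, ∑ v ∈ M, f v u = 0)
    {i j : X} (hi : i ∈ M) (hj : j ∈ M) (hpos : 0 < f i j) :
    ∃ c : List X, IsCycleIn M c ∧ (i, j) ∈ cyclePairs c ∧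
      ∀ pr ∈ cyclePairs c, 0 < f pr.1 pr.2 := by
  classical
  have hfd : ∀ u, f u u = 0 := by intro u; have := hskew u u; linarith
  have hij : i ≠ j := by rintro rfl; rw [hfd] at hpos; exact lt_irrefl _ hpos
  set R : X → X → Prop := fun a b => 0 < f a b with hR
  set SP : X → Prop := fun v => ∃ l : List X, l.Chain' R ∧ l.Nodup ∧ (∀ x ∈ l, x ∈ M) ∧
      l.head? = some j ∧ l.getLast? = some v with hSP
  have closure : ∀ v w, SP v → w ∈ M → 0 < f v w → SP w := by
    rintro v w ⟨l, hc, hn, hm, hh, hl⟩ hwM hvw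
    by_cases hwl : w ∈ l
    · obtain ⟨s, t, rfl⟩ := List.append_of_mem hwl
      have hpre : (s ++ [w]) <+: (s ++ w :: t) := ⟨t, by simp⟩
      refine ⟨s ++ [w], ?_, hn.sublist hpre.sublist, fun x hx => hm x (hpre.sublist.mem hx),
        ?_, List.getLast?_concat⟩
      · rw [show s ++ w :: t = (s ++ [w]) ++ t by simp] at hc
        exact (List.isChain_append.mp hc).1
      · cases s with
        | nil => simpa using hh
        | cons a s' => simpa using hh
    · have hlne : l ≠ [] := by rintro rfl; simp at hh
      refine ⟨l ++ [w], ?_, ?_, ?_, ?_, List.getLast?_concat⟩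
      · refine List.isChain_append.mpr ⟨hc, List.isChain_singleton w, ?_⟩
        intro x hx y hy
        simp at hy
        rw [hl] at hx
        simp at hx
        subst hx; subst hy
        exact hvw
      · simp [List.nodup_append, hn, hwl]
        rintro a ha rfl
        exact hwl ha
      · intro x hx
        rcases List.mem_append.mp hx with h | h
        · exact hm x h
        · simp at h; subst h; exact hwM
      · cases l with
        | nil => exact absurd rfl hlne
        | cons a l' => simpa using hh
  have base : SP j := ⟨[j], List.isChain_singleton j, List.nodup_singleton j,
    by simpa using hj, rfl, rfl⟩
  set S : Finset X := M.filter SP with hSdef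
  have hjS : j ∈ S := Finset.mem_filter.mpr ⟨hj, base⟩
  have hSM : S ⊆ M := Finset.filter_subset _ _
  have hiS : i ∈ S := by
    by_contra hiS
    have key : ∀ u ∈ S, ∀ v ∈ M \ S, 0 ≤ f v u := by
      intro u hu v hv
      rcases Finset.mem_sdiff.mp hv with ⟨hvM, hvS⟩
      have hfuv : ¬ 0 < f u v := by
        intro hf
        exact hvS (Finset.mem_filter.mpr ⟨hvM, closure u v (Finset.mem_filter.mp hu).2 hvM hf⟩)
      rw [hskew]
      push_neg at hfuv
      linarith
    have h1 : ∑ u ∈ S, ∑ v ∈ M, f v u = 0 :=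
      Finset.sum_eq_zero fun u hu => hdiv u (hSM hu)
    have h2 : ∀ u ∈ S, ∑ v ∈ M, f v u = ∑ v ∈ M \ S, f v u + ∑ v ∈ S, f v u :=
      fun u _ => (Finset.sum_sdiff hSM).symm
    have h3 : ∑ u ∈ S, ∑ v ∈ S, f v u = 0 := by
      have e2 : ∑ u ∈ S, ∑ v ∈ S, f v u = ∑ v ∈ S, ∑ u ∈ S, f v u := Finset.sum_comm
      have e0 : ∑ u ∈ S, ∑ v ∈ S, (f v u + f u v) = 0 := by
        apply Finset.sum_eq_zero; intro u _
        apply Finset.sum_eq_zero; intro v _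
        rw [hskew]; ring
      simp_rw [Finset.sum_add_distrib] at e0
      rw [← e2] at e0
      linarith
    have h4 : ∑ u ∈ S, ∑ v ∈ M \ S, f v u = 0 := by
      have := Finset.sum_congr rfl h2
      rw [this, Finset.sum_add_distrib, h3, add_zero] at h1
      exact h1
    have hpos' : 0 < ∑ u ∈ S, ∑ v ∈ M \ S, f v u := by
      refine Finset.sum_pos' (fun u hu => Finset.sum_nonneg fun v hv => key u hu v hv) ⟨j, hjS, ?_⟩
      refine Finset.sum_pos' (fun v hv => key j hjS v hv) ⟨i, Finset.mem_sdiff.mpr ⟨hi, hiS⟩, hpos⟩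
    rw [h4] at hpos'
    exact lt_irrefl _ hpos'
  obtain ⟨l, hc, hn, hm, hh, hl⟩ := (Finset.mem_filter.mp hiS).2
  -- decompose l = j :: b :: t2
  obtain ⟨t, rfl⟩ : ∃ t, l = j :: t := by
    cases l with
    | nil => simp at hh
    | cons a l' => exact ⟨l', by simpa using (by simpa using hh : a = j) ▸ rfl⟩
  obtain ⟨b, t2, rfl⟩ : ∃ b t2, t = b :: t2 := by
    cases t with
    | nil => simp at hl; exact absurd hl.symm hij
    | cons b t2 => exact ⟨b, t2, rfl⟩
  set l : List X := j :: b :: t2 with hldef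
  have hlne : l ≠ [] := by simp [hldef]
  have hlast : l.getLast hlne = i := by
    have := List.getLast?_eq_getLast hlne
    rw [hl] at this
    exact (Option.some_injective _ this).symm
  set l' : List X := l.dropLast with hl'def
  have hdecomp : l' ++ [i] = l := by
    rw [hl'def, ← hlast]
    exact List.dropLast_append_getLast hlne
  have hl'cons : l' = j :: (b :: t2).dropLast := by simp [hl'def, hldef]
  refine ⟨i :: l', ⟨?_, ?_, ?_⟩, ?_, ?_⟩
  · -- nodup
    rw [← hdecomp] at hn
    rw [List.nodup_append] at hn
    refine List.nodup_cons.mpr ⟨?_, hn.1⟩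
    intro hmem
    exact hn.2.2 i hmem i (List.mem_singleton_self i) rfl
  · -- length
    rw [hl'cons]
    simp
  · -- membership
    intro x hx
    rcases List.mem_cons.mp hx with rfl | hx
    · exact hi
    · exact hm x (by rw [← hdecomp]; exact List.mem_append_left _ hx)
  · -- (i,j) ∈ cyclePairs
    show (i, j) ∈ (i :: l').zip ((i :: l').rotate 1)
    rw [List.rotate_cons_succ, List.rotate_zero, hdecomp, hldef, hl'cons]
    simp [List.zip_cons_cons]
  · -- all pairs positive
    intro pr hpr
    have hch : List.Chain R i (l' ++ [i]) := by
      rw [hdecomp, hldef]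
      exact List.Chain.cons hpos hc
    refine chain_zip_aux l' i i hch pr ?_
    simpa only [cyclePairs, List.rotate_cons_succ, List.rotate_zero] using hpr

/-- If `p` is rationalizable on `M` by an MSC model that is fully comparable on `M`,
then `p(·|M)` is positive and bounded in a cycle over every ordered pair of distinct
alternatives of `M`. -/
theorem stmt7 (M : Finset X) (hM : M.Nonempty)
    (p : Finset X → X → ℝ) (hp : IsSCF p)
    (q : Finset X → X → X → ℝ) (hrat : Rationalizes M q p)
    (hfc : ∀ i ∈ M, ∀ j ∈ M, i ≠ j → 0 < q M i j) :
    (∀ i ∈ M, 0 < p M i) ∧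
    (∀ i ∈ M, ∀ j ∈ M, i ≠ j → BoundedInCycle p M i j) := by
  classical
  obtain ⟨⟨hrs, hA1, hA2, hA3⟩, hstat⟩ := hrat
  have hMrel : RelMenu M M := Or.inl rfl
  obtain ⟨hQnn, hQrow⟩ := hrs M hMrel
  obtain ⟨hpn, hp0, hps⟩ := hp M hM
  have hstatM := hstat M hMrel
  have hpos : ∀ i ∈ M, 0 < p M i := by
    intro i hiM
    rcases lt_or_eq_of_le (hpn i) with h | h
    · exact h
    · exfalso
      have hsum : ∑ k ∈ M, p M k * q M k i = 0 := by rw [hstatM i hiM, ← h]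
      have hnn : ∀ k ∈ M, 0 ≤ p M k * q M k i := fun k hk =>
        mul_nonneg (hpn k) (hQnn k hk i hiM)
      have hz := (Finset.sum_eq_zero_iff_of_nonneg hnn).mp hsum
      have hall : ∀ k ∈ M, p M k = 0 := by
        intro k hk
        by_cases hki : k = i
        · subst hki; exact h.symm
        · have h1 := hz k hk
          have hq := hfc k hk i hiM hki
          rcases mul_eq_zero.mp h1 with h2 | h2
          · exact h2
          · exact absurd h2 (ne_of_gt hq)
      rw [Finset.sum_congr rfl hall, Finset.sum_const, smul_zero] at hps
      exact one_ne_zero hps.symm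
  refine ⟨hpos, ?_⟩
  -- pair-level facts
  have pairRel : ∀ u ∈ M, ∀ v ∈ M, u ≠ v → RelMenu M ({u, v} : Finset X) := by
    intro u hu v hv huv
    refine Or.inr ⟨?_, Finset.card_pair huv⟩
    intro x hx
    rcases Finset.mem_insert.mp hx with rfl | hx
    · exact hu
    · rw [Finset.mem_singleton.mp hx]; exact hv
  have keyPair : ∀ u ∈ M, ∀ v ∈ M, u ≠ v →
      p {u, v} u * q M u v = p {u, v} v * q M v u ∧ 0 < p {u, v} u := by
    intro u hu v hv huv
    have hrel := pairRel u hu v hv huv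
    obtain ⟨hnn2, hrow2⟩ := hrs _ hrel
    have huN : u ∈ ({u, v} : Finset X) := Finset.mem_insert_self u _
    have hvN : v ∈ ({u, v} : Finset X) := Finset.mem_insert_of_mem (Finset.mem_singleton_self v)
    obtain ⟨hpn2, _, hps2⟩ := hp {u, v} ⟨u, huN⟩
    have hstat2 := hstat _ hrel
    have hsum2 : p {u, v} u + p {u, v} v = 1 := by
      rw [← Finset.sum_pair huv]; exact hps2
    have hbalraw := hstat2 v hvN
    rw [Finset.sum_pair huv] at hbalraw
    have hrowv := hrow2 v hvN
    rw [Finset.sum_pair huv] at hrowv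
    have bal : p {u, v} u * q {u, v} u v = p {u, v} v * q {u, v} v u := by
      linear_combination hbalraw - p {u, v} v * hrowv
    have hA3' := hA3 M hMrel u hu v hv huv
    have hq2pos : 0 < q {u, v} u v := by
      rcases lt_or_eq_of_le (hnn2 u huN v hvN) with h | h
      · exact h
      · exfalso
        have hvu := hA2 u hu v hv huv h.symm
        rw [← h, zero_mul] at hA3'
        have := hfc u hu v hv huv
        rcases mul_eq_zero.mp hA3'.symm with h2 | h2
        · exact absurd h2 (ne_of_gt hvu)
        · exact absurd h2 (ne_of_gt this)
    have h5 : p {u, v} u * q M u v = p {u, v} v * q M v u := by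
      have h5' : q {u, v} u v * (p {u, v} u * q M u v) =
          q {u, v} u v * (p {u, v} v * q M v u) := by
        linear_combination q M u v * bal - p {u, v} v * hA3'
      exact mul_left_cancel₀ (ne_of_gt hq2pos) h5'
    refine ⟨h5, ?_⟩
    rcases lt_or_eq_of_le (hpn2 u) with h | h
    · exact h
    · exfalso
      rw [← h, zero_mul] at h5
      have hqvu := hfc v hv u hu huv.symm
      rcases mul_eq_zero.mp h5.symm with h2 | h2
      · rw [← h, h2] at hsum2; norm_num at hsum2
      · exact absurd h2 (ne_of_gt hqvu)
  set F : X → X → ℝ := fun u v => p M u * q M u v - p M v * q M v u with hF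
  have hskew : ∀ u v, F u v = - F v u := by intro u v; simp only [hF]; ring
  have hdiv : ∀ u ∈ M, ∑ v ∈ M, F v u = 0 := by
    intro u hu
    simp only [hF]
    rw [Finset.sum_sub_distrib, hstatM u hu, ← Finset.mul_sum, hQrow u hu, mul_one, sub_self]
  have signRel : ∀ u ∈ M, ∀ v ∈ M, u ≠ v →
      delta p M u v * q M v u = p {u, v} u * F u v := by
    intro u hu v hv huv
    obtain ⟨h5, _⟩ := keyPair u hu v hv huv
    simp only [delta, hF]
    linear_combination (- p M u) * h5
  have signPos : ∀ u ∈ M, ∀ v ∈ M, u ≠ v → 0 < F u v → 0 < delta p M u v := by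
    intro u hu v hv huv hFp
    have hsr := signRel u hu v hv huv
    have hq := hfc v hv u hu huv.symm
    obtain ⟨_, hs⟩ := keyPair u hu v hv huv
    nlinarith
  have signNeg : ∀ u ∈ M, ∀ v ∈ M, u ≠ v → F u v < 0 → delta p M u v < 0 := by
    intro u hu v hv huv hFn
    have hsr := signRel u hu v hv huv
    have hq := hfc v hv u hu huv.symm
    obtain ⟨_, hs⟩ := keyPair u hu v hv huv
    nlinarith
  intro i hiM j hjM hij
  rcases lt_trichotomy (F i j) 0 with hlt | heq | hgt
  · -- negative cycle via flipped flow
    have hskew' : ∀ u v, (fun a b => F b a) u v = - (fun a b => F b a) v u := by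
      intro u v; simp only; rw [hskew]
    have hdiv' : ∀ u ∈ M, ∑ v ∈ M, F u v = 0 := by
      intro u hu
      have := hdiv u hu
      have e : ∑ v ∈ M, F u v = - ∑ v ∈ M, F v u := by
        rw [← Finset.sum_neg_distrib]
        exact Finset.sum_congr rfl fun v _ => by rw [hskew]
      rw [e, this, neg_zero]
    have hpos' : 0 < (fun a b => F b a) i j := by
      simp only
      have := hskew j i
      linarith
    obtain ⟨c, hcyc, hmem, hall⟩ := exists_pos_cycle hskew' (fun u hu => hdiv' u hu) hiM hjM hpos'
    right
    refine ⟨c, hcyc, hmem, Or.inr ?_⟩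
    intro pr hpr
    have hFneg : F pr.1 pr.2 < 0 := by
      have := hall pr hpr
      have := hskew pr.1 pr.2
      linarith [hall pr hpr]
    obtain ⟨h1, h2⟩ := List.of_mem_zip hpr
    have hm1 : pr.1 ∈ M := hcyc.2.2 _ h1
    have hm2 : pr.2 ∈ M := hcyc.2.2 _ ((List.mem_rotate).mp h2)
    have hne : pr.1 ≠ pr.2 := by
      rintro he
      rw [he] at hFneg
      have : F pr.2 pr.2 = 0 := by
        have := hskew pr.2 pr.2; linarith
      rw [this] at hFneg
      exact lt_irrefl _ hFneg
    exact signNeg _ hm1 _ hm2 hne hFneg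
  · left
    have hsr := signRel i hiM j hjM hij
    rw [heq, mul_zero] at hsr
    have hq := (hfc j hjM i hiM hij.symm).ne'
    rcases mul_eq_zero.mp hsr with h | h
    · exact h
    · exact absurd h hq
  · obtain ⟨c, hcyc, hmem, hall⟩ := exists_pos_cycle hskew hdiv hiM hjM hgt
    right
    refine ⟨c, hcyc, hmem, Or.inl ?_⟩
    intro pr hpr
    have hFpos := hall pr hpr
    obtain ⟨h1, h2⟩ := List.of_mem_zip hpr
    have hm1 : pr.1 ∈ M := hcyc.2.2 _ h1
    have hm2 : pr.2 ∈ M := hcyc.2.2 _ ((List.mem_rotate).mp h2)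
    have hne : pr.1 ≠ pr.2 := by
      rintro he
      rw [he] at hFpos
      have : F pr.2 pr.2 = 0 := by
        have := hskew pr.2 pr.2; linarith
      rw [this] at hFpos
      exact lt_irrefl _ hFpos
    exact signPos _ hm1 _ hm2 hne hFpos
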